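/- arXiv:1410.7417 — 3 statements merged into one kernel-verified Lean document; each statement's English description precedes it below -/
import Mathlib

section
/- Let k be a field, R a finitely generated commutative k-algebra, φ₁, …, φₙ ∈ R, and δ ∈ R such that the image of δ in R/(φ₂, …, φₙ) is nilpotent. Assume that R/(φ₁, …, φₙ) is a finite-dimensional k-vector space. Then the quotient R[t]/(φ₁ + δ·t, φ₂, …, φₙ) of the polynomial ring R[t] by the ideal generated by φ₁ + δ·t and (the images of) φ₂, …, φₙ is a finitely generated module over the polynomial ring k[t]. -/
open Polynomial

lemma finite_of_nilpotent_endo {T M : Type*} [CommRing T] [AddCommGroup M] [Module T M]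
    (f : M →ₗ[T] M) (m : ℕ) (hf : f ^ m = 0) (F : Submodule T M) (hF : F.FG)
    (h : F ⊔ LinearMap.range f = ⊤) : Module.Finite T M := by
  have key : ∀ j : ℕ, ∃ G : Submodule T M, G.FG ∧ G ⊔ Submodule.map (f ^ j) ⊤ = ⊤ := by
    intro j
    induction j with
    | zero =>
      exact ⟨⊥, Submodule.fg_bot, by simp [Module.End.one_eq_id]⟩
    | succ j ih =>
      obtain ⟨G, hG, hGt⟩ := ih
      refine ⟨G ⊔ Submodule.map (f ^ j) F, hG.sup (hF.map _), ?_⟩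
      have h1 : Submodule.map (f ^ (j + 1)) (⊤ : Submodule T M)
          = Submodule.map (f ^ j) (Submodule.map f ⊤) := by
        rw [← Submodule.map_comp, ← Module.End.mul_eq_comp, ← pow_succ]
      have h2 : Submodule.map (f ^ j) (⊤ : Submodule T M)
          = Submodule.map (f ^ j) F ⊔ Submodule.map (f ^ (j + 1)) ⊤ := by
        conv_lhs => rw [← h, Submodule.map_sup, LinearMap.range_eq_map, ← h1]
      rw [sup_assoc, ← h2, hGt]
  obtain ⟨G, hG, hGt⟩ := key m
  rw [hf, Submodule.map_zero, sup_bot_eq] at hGt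
  exact ⟨hGt ▸ hG⟩

/-- Finiteness-of-support claim of Lemma 2.4 ('nilpotent'): if `δ` is nilpotent modulo
`(φ₂, …, φₙ)` and `R/(φ₁, …, φₙ)` is finite-dimensional over `k`, then
`R[t]/(φ₁ + δ·t, φ₂, …, φₙ)` is a finitely generated `k[t]`-module. -/
theorem stmt2 {k : Type*} [Field k] {R : Type*} [CommRing R] [Algebra k R]
    [Algebra.FiniteType k R]
    (n : ℕ) (φ : Fin (n + 1) → R) (δ : R)
    (hδ : IsNilpotent
      (Ideal.Quotient.mk (Ideal.span (Set.range fun i : Fin n => φ i.succ)) δ))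
    (hfin : FiniteDimensional k (R ⧸ Ideal.span (Set.range φ)))
    (J : Ideal (Polynomial R))
    (hJ : J = Ideal.span ({Polynomial.C (φ 0) + Polynomial.C δ * Polynomial.X} ∪
        Set.range fun i : Fin n => Polynomial.C (φ i.succ))) :
    letI : Algebra (Polynomial k) (Polynomial R ⧸ J) :=
      ((Ideal.Quotient.mk J).comp (Polynomial.mapRingHom (algebraMap k R))).toAlgebra
    Module.Finite (Polynomial k) (Polynomial R ⧸ J) := by
  letI : Algebra (Polynomial k) (Polynomial R ⧸ J) :=
    ((Ideal.Quotient.mk J).comp (Polynomial.mapRingHom (algebraMap k R))).toAlgebra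
  show Module.Finite (Polynomial k) (Polynomial R ⧸ J)
  set N₀ : Ideal R := Ideal.span (Set.range φ) with hN₀
  obtain ⟨m, hm⟩ := hδ
  -- δ ^ m ∈ the ideal generated by the φ i.succ
  have hδm : δ ^ m ∈ Ideal.span (Set.range fun i : Fin n => φ i.succ) := by
    rwa [← map_pow, Ideal.Quotient.eq_zero_iff_mem] at hm
  -- the element a = image of C (φ 0)
  set g : R →+* Polynomial R ⧸ J := (Ideal.Quotient.mk J).comp (Polynomial.C) with hg
  set a : Polynomial R ⧸ J := g (φ 0) with ha
  -- C (δ ^ m) ∈ J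
  have hCδ : (Polynomial.C (δ ^ m) : Polynomial R) ∈ J := by
    have h1 : (Polynomial.C (δ ^ m) : Polynomial R) ∈
        Ideal.map (Polynomial.C : R →+* Polynomial R)
          (Ideal.span (Set.range fun i : Fin n => φ i.succ)) :=
      Ideal.mem_map_of_mem _ hδm
    rw [Ideal.map_span] at h1
    refine Ideal.span_le.mpr ?_ h1
    rintro _ ⟨_, ⟨i, rfl⟩, rfl⟩
    rw [hJ]
    exact Ideal.subset_span (Or.inr ⟨i, rfl⟩)
  -- a ^ m = 0
  have hgen : ∀ i : Fin n, (Polynomial.C (φ i.succ) : Polynomial R) ∈ J := by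
    intro i; rw [hJ]; exact Ideal.subset_span (Or.inr ⟨i, rfl⟩)
  have ham : a ^ m = 0 := by
    have hxy : (Polynomial.C (φ 0) : Polynomial R) - (-(Polynomial.C δ * Polynomial.X)) ∈ J := by
      rw [sub_neg_eq_add, hJ]
      exact Ideal.subset_span (Or.inl rfl)
    have hd1 : (Polynomial.C (φ 0) : Polynomial R) ^ m
        - (-(Polynomial.C δ * Polynomial.X)) ^ m ∈ J := by
      obtain ⟨c, hc⟩ := sub_dvd_pow_sub_pow (Polynomial.C (φ 0) : Polynomial R)
        (-(Polynomial.C δ * Polynomial.X)) m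
      rw [hc]
      exact Ideal.mul_mem_right _ _ hxy
    have hd2 : (-(Polynomial.C δ * Polynomial.X) : Polynomial R) ^ m ∈ J := by
      obtain ⟨c, hc⟩ := pow_dvd_pow_of_dvd
        ((dvd_neg.mpr (dvd_mul_right (Polynomial.C δ) Polynomial.X))) m
      rw [hc, ← Polynomial.C_pow]
      exact Ideal.mul_mem_right _ _ hCδ
    have hmem : (Polynomial.C (φ 0) : Polynomial R) ^ m ∈ J := by
      have := Ideal.add_mem J hd1 hd2
      rwa [sub_add_cancel] at this
    rw [ha, hg, RingHom.comp_apply, ← map_pow, Ideal.Quotient.eq_zero_iff_mem]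
    exact hmem
  -- the nilpotent endomorphism
  set f : (Polynomial R ⧸ J) →ₗ[Polynomial k] (Polynomial R ⧸ J) :=
    LinearMap.mulLeft (Polynomial k) a with hfdef
  have hf : f ^ m = 0 := by
    rw [hfdef, LinearMap.pow_mulLeft, ham, LinearMap.mulLeft_zero_eq_zero]
  -- generators from finite dimensionality
  obtain ⟨d, b', hb'⟩ := Module.Finite.exists_fin (R := k) (M := R ⧸ N₀)
  choose b hb using fun i => Ideal.Quotient.mk_surjective (I := N₀) (b' i)
  set F : Submodule (Polynomial k) (Polynomial R ⧸ J) :=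
    Submodule.span (Polynomial k) (Set.range fun i => g (b i)) with hF
  -- scalar action description
  have hsmul : ∀ (q : Polynomial k) (x : Polynomial R ⧸ J),
      q • x = Ideal.Quotient.mk J (q.map (algebraMap k R)) * x := fun q x => rfl
  -- key membership for constants
  have hideal : ∀ r : R, r ∈ N₀ → g r ∈ LinearMap.range f := by
    intro r hr
    have h1 : g r ∈ Ideal.map g N₀ := Ideal.mem_map_of_mem g hr
    rw [hN₀, Ideal.map_span] at h1
    have h2 : Ideal.span (g '' Set.range φ) ≤ Ideal.span {a} := by
      refine Ideal.span_le.mpr ?_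
      rintro _ ⟨_, ⟨i, rfl⟩, rfl⟩
      refine Fin.cases ?_ ?_ i
      · exact Ideal.subset_span rfl
      · intro j
        have : g (φ j.succ) = 0 := by
          rw [hg, RingHom.comp_apply, Ideal.Quotient.eq_zero_iff_mem]
          exact hgen j
        rw [this]
        exact Ideal.zero_mem _
    obtain ⟨s, hs⟩ := Ideal.mem_span_singleton'.mp (h2 h1)
    exact ⟨s, by rw [hfdef, LinearMap.mulLeft_apply, mul_comm]; exact hs⟩
  have hCmem : ∀ r : R, g r ∈ F ⊔ LinearMap.range f := by
    intro r
    have hr : Ideal.Quotient.mk N₀ r ∈ Submodule.span k (Set.range b') := by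
      rw [hb']; trivial
    obtain ⟨c, hc⟩ := (Submodule.mem_span_range_iff_exists_fun k).mp hr
    set r' : R := ∑ i, algebraMap k R (c i) * b i with hr'
    have hdiff : r - r' ∈ N₀ := by
      rw [← Ideal.Quotient.eq_zero_iff_mem, map_sub, hr', map_sum, sub_eq_zero]
      rw [← hc]
      refine Finset.sum_congr rfl fun i _ => ?_
      rw [map_mul, hb, Algebra.smul_def, ← Ideal.Quotient.algebraMap_eq,
        ← IsScalarTower.algebraMap_apply]
    have h1 : g r' ∈ F := by
      rw [hr', map_sum]
      refine Submodule.sum_mem _ fun i _ => ?_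
      have : g (algebraMap k R (c i) * b i) = (Polynomial.C (c i) : Polynomial k) • g (b i) := by
        rw [hsmul, map_mul]
        congr 1
        rw [hg, RingHom.comp_apply]
        congr 1
        rw [Polynomial.map_C]
      rw [this]
      exact Submodule.smul_mem _ _ (Submodule.subset_span ⟨i, rfl⟩)
    have h2 : g (r - r') ∈ LinearMap.range f := hideal _ hdiff
    have : g r = g r' + g (r - r') := by rw [← map_add]; ring_nf
    rw [this]
    exact Submodule.add_mem _ (Submodule.mem_sup_left h1) (Submodule.mem_sup_right h2)
  -- the span condition
  have hspan : F ⊔ LinearMap.range f = ⊤ := by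
    rw [eq_top_iff]
    rintro y -
    obtain ⟨p, rfl⟩ := Ideal.Quotient.mk_surjective y
    induction p using Polynomial.induction_on' with
    | add p q hp hq => rw [map_add]; exact Submodule.add_mem _ hp hq
    | monomial j r =>
      have h1 : Ideal.Quotient.mk J (Polynomial.monomial j r) =
          ((Polynomial.X : Polynomial k) ^ j) • Ideal.Quotient.mk J (Polynomial.C r) := by
        rw [hsmul, ← map_mul]
        congr 1
        rw [Polynomial.map_pow, Polynomial.map_X, mul_comm, Polynomial.C_mul_X_pow_eq_monomial]
      rw [h1]
      exact Submodule.smul_mem _ _ (hCmem r)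
  exact finite_of_nilpotent_endo f m hf F
    (Submodule.fg_span (Set.finite_range _)) hspan
end

section
/- Let k be a field of characteristic zero, N ≥ 1, K a field extension of k, and x₁, …, x_N ∈ K elements algebraic over k with minimal polynomials p₁, …, p_N ∈ k[T]. Let J be a finite index set, and for each j ∈ J let L_j be a field extension of k together with elements y_{j,1}, …, y_{j,N} ∈ L_j such that p_i(y_{j,i}) ≠ 0 for at least one index i (evaluation via the algebra map k → L_j). Then there exist λ₁, …, λ_N ∈ k such that the polynomial F(t₁, …, t_N) = Σ_{i=1}^N λ_i·p_i(t_i) satisfies F(x₁, …, x_N) = 0 in K and F(y_{j,1}, …, y_{j,N}) ≠ 0 in L_j for every j ∈ J. -/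
/-- Explicit content of the proof of Lemma 4.1 ('hsurface'): over a field `k` of
characteristic zero, given algebraic elements `x₁, …, x_N` of an extension `K` with minimal
polynomials `p₁, …, p_N`, and finitely many points `y_j` of extensions `L_j` at which some
`p_i` does not vanish, there are `λ₁, …, λ_N ∈ k` such that `F = Σ λ_i p_i(t_i)` vanishes at
`x` but at no `y_j`. -/
theorem stmt6 {k : Type*} [Field k] [CharZero k] (N : ℕ) (hN : 1 ≤ N)
    {K : Type*} [Field K] [Algebra k K] (x : Fin N → K)
    (hx : ∀ i, IsAlgebraic k (x i))
    {J : Type*} [Finite J]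
    (L : J → Type*) [∀ j, Field (L j)] [∀ j, Algebra k (L j)]
    (y : ∀ j, Fin N → L j)
    (hy : ∀ j, ∃ i, Polynomial.aeval (y j i) (minpoly k (x i)) ≠ 0) :
    ∃ lam : Fin N → k,
      (∑ i, lam i • Polynomial.aeval (x i) (minpoly k (x i)) = 0) ∧
      ∀ j, ∑ i, lam i • Polynomial.aeval (y j i) (minpoly k (x i)) ≠ 0 := by
  -- the linear functional for each j
  set φ : ∀ j, (Fin N → k) →ₗ[k] L j := fun j =>
    { toFun := fun lam => ∑ i, lam i • Polynomial.aeval (y j i) (minpoly k (x i))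
      map_add' := by intro a b; simp [add_smul, Finset.sum_add_distrib]
      map_smul' := by intro c a; simp [Finset.smul_sum, smul_smul] }
  have hker : ∀ j, LinearMap.ker (φ j) ≠ ⊤ := by
    intro j h
    obtain ⟨i, hi⟩ := hy j
    have : (φ j) (Pi.single i 1) = 0 := by
      rw [← LinearMap.mem_ker, h]; trivial
    simp [φ, Pi.single_apply, Finset.sum_ite_eq', hi] at this
  have hcov : ⋃ j, ((LinearMap.ker (φ j) : Subspace k (Fin N → k)) : Set (Fin N → k))
      ≠ Set.univ := by
    intro h
    obtain ⟨j, hj⟩ := Subspace.exists_eq_top_of_iUnion_eq_univ h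
    exact hker j hj
  obtain ⟨lam, hlam⟩ := Set.ne_univ_iff_exists_notMem _ |>.mp hcov
  refine ⟨lam, by simp [minpoly.aeval], fun j hj => ?_⟩
  exact hlam (Set.mem_iUnion.mpr ⟨j, hj⟩)
end

section
/- Let k be a field, R a finitely generated commutative k-algebra, 𝔪 a maximal ideal of R, and α : k[x₁, …, xₙ] → R a k-algebra homomorphism such that the composite k[x₁, …, xₙ] → R → R/𝔪 is surjective. Then there exist an integer m ≥ 0 and elements ρ₁, …, ρ_m ∈ 𝔪 such that R is generated as a k-algebra by α(x₁), …, α(xₙ) together with ρ₁, …, ρ_m. -/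
/-- Algebraic form of part (1) of Lemma 4.5 ('psideformation'): if `R` is a finitely
generated `k`-algebra, `𝔪` a maximal ideal, and `α : k[x₁,…,xₙ] → R` a `k`-algebra map whose
composite with `R → R/𝔪` is surjective, then there are finitely many elements
`ρ₁, …, ρ_m ∈ 𝔪` such that `R` is generated as a `k`-algebra by the `α(xᵢ)` and the `ρⱼ`. -/
theorem stmt7 {k : Type*} [Field k] {R : Type*} [CommRing R] [Algebra k R]
    [Algebra.FiniteType k R] (n : ℕ)
    (𝔪 : Ideal R) [𝔪.IsMaximal]
    (α : MvPolynomial (Fin n) k →ₐ[k] R)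
    (hsurj : Function.Surjective ((Ideal.Quotient.mkₐ k 𝔪).comp α)) :
    ∃ (m : ℕ) (ρ : Fin m → R), (∀ i, ρ i ∈ 𝔪) ∧
      Algebra.adjoin k
        ((Set.range fun i => α (MvPolynomial.X i)) ∪ Set.range ρ) = ⊤ := by
  obtain ⟨s, hs⟩ := Algebra.FiniteType.out (R := k) (A := R)
  set y : Fin s.card → R := fun i => (s.equivFin.symm i : R) with hy
  choose p hp using fun i => hsurj (Ideal.Quotient.mk 𝔪 (y i))
  refine ⟨s.card, fun i => y i - α (p i), ?_, ?_⟩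
  · intro i
    have := hp i
    simp only [AlgHom.comp_apply, Ideal.Quotient.mkₐ_eq_mk] at this
    rw [Ideal.Quotient.eq] at this
    simpa using 𝔪.neg_mem this
  · rw [eq_top_iff, ← hs]
    apply Algebra.adjoin_le
    intro x hx
    set j := s.equivFin ⟨x, hx⟩ with hj
    have hx' : x = α (p j) + (y j - α (p j)) := by simp [hy, hj]
    rw [hx']
    refine add_mem ?_ (Algebra.subset_adjoin (Or.inr ⟨j, rfl⟩))
    have hmem : α (p j) ∈ (Algebra.adjoin k
        (Set.range (MvPolynomial.X : Fin n → MvPolynomial (Fin n) k))).map α :=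
      ⟨p j, by simp [MvPolynomial.adjoin_range_X], rfl⟩
    rw [AlgHom.map_adjoin, ← Set.range_comp] at hmem
    exact Algebra.adjoin_mono Set.subset_union_left hmem
end
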